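/- arXiv:2108.01432 — 5 statements merged into one kernel-verified Lean document; each statement's English description precedes it below -/
import Mathlib

section
/- (SIR principle) Let Y be a real random variable and Z an integrable random vector in R^p. Let P be an orthogonal projection on R^p such that Y and Z are conditionally independent given PZ, and suppose the linearity condition E[Z | PZ] = PZ holds almost surely. Then (I_p - P) E[Z | Y] = 0 almost surely, i.e., E[Z | Y] lies in the range of P almost surely. -/
open MeasureTheory Filter
open scoped Topology

/-- **SIR principle.** If `Y` and `Z` are conditionally independent given `PZ`
(for an orthogonal projection `P`) and the linearity condition `E[Z | PZ] = PZ` holds a.s.,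
then `(I - P) E[Z | Y] = 0` almost surely. -/
theorem stmt_1 {Ω : Type*} [MeasurableSpace Ω] (μ : Measure Ω) [IsProbabilityMeasure μ]
    {p : ℕ} (Y : Ω → ℝ) (hY : Measurable Y)
    (Z : Ω → Fin p → ℝ) (hZmeas : Measurable Z) (hZint : Integrable Z μ)
    (P : Matrix (Fin p) (Fin p) ℝ) (hPproj : P * P = P) (hPsym : P.transpose = P)
    (m mY : MeasurableSpace Ω)
    (hm : m = MeasurableSpace.comap (fun ω => P.mulVec (Z ω)) inferInstance)
    (hmY : mY = MeasurableSpace.comap Y inferInstance)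
    (hCI : ∀ g : (Fin p → ℝ) → ℝ, Measurable g → (∃ Cg, ∀ z, |g z| ≤ Cg) →
      μ[(fun ω => g (Z ω))|mY ⊔ m] =ᵐ[μ] μ[(fun ω => g (Z ω))|m])
    (hLC : ∀ i, μ[(fun ω => Z ω i)|m] =ᵐ[μ] fun ω => P.mulVec (Z ω) i) :
    ∀ i, (fun ω => (1 - P).mulVec (fun j => (μ[(fun ω' => Z ω' j)|mY]) ω) i)
      =ᵐ[μ] fun _ => (0 : ℝ) := by
  rename_i m0 hPμ
  intro i
  -- basic measurability facts
  have hPZmeas : @Measurable Ω (Fin p → ℝ) m0 _ fun ω => P.mulVec (Z ω) := by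
    have hc : Continuous (P.mulVecLin : (Fin p → ℝ) →ₗ[ℝ] (Fin p → ℝ)) :=
      LinearMap.continuous_of_finiteDimensional _
    have := hc.measurable.comp hZmeas
    simpa [Matrix.mulVecLin_apply, Function.comp_def] using this
  have hmle : m ≤ m0 := by
    rw [hm]; exact hPZmeas.comap_le
  have hmYle : mY ≤ m0 := by
    rw [hmY]; exact hY.comap_le
  have hsup : mY ⊔ m ≤ m0 := sup_le hmYle hmle
  -- componentwise integrability
  have hZi : ∀ j, Integrable (fun ω => Z ω j) μ := fun j =>
    (ContinuousLinearMap.proj (R := ℝ) (φ := fun _ : Fin p => ℝ) j).integrable_comp hZint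
  -- Step 1: extend conditional independence from bounded g to the coordinate functions,
  -- by truncation and dominated convergence.
  have hCI' : ∀ j, μ[(fun ω => Z ω j)|mY ⊔ m] =ᵐ[μ] μ[(fun ω => Z ω j)|m] := by
    intro j
    -- truncations
    set g : ℕ → (Fin p → ℝ) → ℝ := fun n z => max (-(n : ℝ)) (min (n : ℝ) (z j)) with hg
    have hgmeas : ∀ n, Measurable (g n) :=
      fun n => measurable_const.max (measurable_const.min (measurable_pi_apply j))
    have hgbdd : ∀ n, ∃ C, ∀ z, |g n z| ≤ C := by
      intro n
      exact ⟨(n : ℝ), fun z => abs_le.2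
        ⟨le_max_left _ _, max_le (neg_le_self (Nat.cast_nonneg n)) (min_le_left _ _)⟩⟩
    have hgdom : ∀ n z, |g n z| ≤ |z j| := by
      intro n z
      refine abs_le.2 ⟨?_, ?_⟩
      · refine le_trans (le_min ?_ (neg_abs_le _)) (le_max_right _ _)
        exact (neg_nonpos.2 (abs_nonneg _)).trans (Nat.cast_nonneg n)
      · refine max_le ?_ ((min_le_right _ _).trans (le_abs_self _))
        exact (neg_nonpos.2 (Nat.cast_nonneg n)).trans (abs_nonneg _)
    have hgtend : ∀ z : Fin p → ℝ, Tendsto (fun n => g n z) atTop (𝓝 (z j)) := by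
      intro z
      refine tendsto_const_nhds.congr' ?_
      filter_upwards [eventually_ge_atTop (Nat.ceil |z j|)] with n hn
      have hn' : |z j| ≤ (n : ℝ) := (Nat.ceil_le.1 hn)
      have h1 : z j ≤ (n : ℝ) := (le_abs_self _).trans hn'
      have h2 : -(n : ℝ) ≤ z j := by
        have := neg_abs_le (z j); linarith
      simp [hg, min_eq_right h1, max_eq_right h2]
    have hmeas' : ∀ n, @AEStronglyMeasurable _ _ _ m0 m0 (fun ω => g n (Z ω)) μ :=
      fun n => ((hgmeas n).comp hZmeas).aestronglyMeasurable
    have hbound : ∀ n, ∀ᵐ ω ∂μ, ‖g n (Z ω)‖ ≤ |Z ω j| :=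
      fun n => Eventually.of_forall fun ω => by
        simpa [Real.norm_eq_abs] using hgdom n (Z ω)
    have hgint : ∀ n, Integrable (fun ω => g n (Z ω)) μ := by
      intro n
      exact (hZi j).abs.mono' (hmeas' n) (hbound n)
    have hintbound : Integrable (fun ω => |Z ω j|) μ := (hZi j).abs
    have htendae : ∀ᵐ ω ∂μ, Tendsto (fun n => g n (Z ω)) atTop (𝓝 (Z ω j)) :=
      Eventually.of_forall fun ω => hgtend (Z ω)
    have h1 : Tendsto (fun n => condExpL1 hsup μ (fun ω => g n (Z ω))) atTop
        (𝓝 (condExpL1 hsup μ (fun ω => Z ω j))) :=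
      tendsto_condExpL1_of_dominated_convergence hsup _ hmeas' hintbound hbound htendae
    have h2 : Tendsto (fun n => condExpL1 hmle μ (fun ω => g n (Z ω))) atTop
        (𝓝 (condExpL1 hmle μ (fun ω => Z ω j))) :=
      tendsto_condExpL1_of_dominated_convergence hmle _ hmeas' hintbound hbound htendae
    have heq : ∀ n, condExpL1 hsup μ (fun ω => g n (Z ω))
        = condExpL1 hmle μ (fun ω => g n (Z ω)) := by
      intro n
      ext1
      refine (condExp_ae_eq_condExpL1 hsup _).symm.trans
        ((hCI (g n) (hgmeas n) (hgbdd n)).trans (condExp_ae_eq_condExpL1 hmle _))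
    have hlim : condExpL1 hsup μ (fun ω => Z ω j) = condExpL1 hmle μ (fun ω => Z ω j) :=
      tendsto_nhds_unique (h1.congr fun n => heq n) h2
    calc μ[(fun ω => Z ω j)|mY ⊔ m]
        =ᵐ[μ] condExpL1 hsup μ (fun ω => Z ω j) := condExp_ae_eq_condExpL1 hsup _
      _ =ᵐ[μ] condExpL1 hmle μ (fun ω => Z ω j) := by rw [hlim]
      _ =ᵐ[μ] μ[(fun ω => Z ω j)|m] := (condExp_ae_eq_condExpL1 hmle _).symm
  -- Step 2: tower property
  have htower : ∀ j, μ[(fun ω => Z ω j)|mY]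
      =ᵐ[μ] μ[(fun ω => P.mulVec (Z ω) j)|mY] := by
    intro j
    have h1 : μ[μ[(fun ω => Z ω j)|mY ⊔ m]|mY] =ᵐ[μ] μ[(fun ω => Z ω j)|mY] :=
      condExp_condExp_of_le le_sup_left hsup
    have h2 : μ[(fun ω => Z ω j)|mY ⊔ m] =ᵐ[μ] (fun ω => P.mulVec (Z ω) j) :=
      (hCI' j).trans (hLC j)
    exact h1.symm.trans (condExp_congr_ae h2)
  -- linearity: (P Z)_j = ∑_k P j k * Z_k
  have hlin : ∀ j, μ[(fun ω => P.mulVec (Z ω) j)|mY]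
      =ᵐ[μ] fun ω => ∑ k, P j k * (μ[(fun ω' => Z ω' k)|mY]) ω := by
    intro j
    have hrw : (fun ω => P.mulVec (Z ω) j)
        = ∑ k, (P j k) • (fun ω => Z ω k) := by
      funext ω
      simp [Matrix.mulVec, dotProduct, Finset.sum_apply]
    rw [hrw]
    have hsum : μ[∑ k, (P j k) • (fun ω => Z ω k)|mY]
        =ᵐ[μ] ∑ k, μ[(P j k) • (fun ω => Z ω k)|mY] :=
      condExp_finsetSum (fun k _ => (hZi k).smul (P j k)) mY
    refine hsum.trans ?_
    have hall : ∀ᵐ ω ∂μ, ∀ k : Fin p,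
        (μ[(P j k) • (fun ω' => Z ω' k)|mY]) ω = ((P j k) • μ[(fun ω' => Z ω' k)|mY]) ω :=
      ae_all_iff.2 fun k => condExp_smul (P j k) (fun ω' => Z ω' k) mY
    filter_upwards [hall] with ω hω
    simp only [Finset.sum_apply]
    exact Finset.sum_congr rfl fun k _ => (hω k).trans (by simp)
  -- Conclude
  have hkey : μ[(fun ω => Z ω i)|mY]
      =ᵐ[μ] fun ω => ∑ k, P i k * (μ[(fun ω' => Z ω' k)|mY]) ω :=
    (htower i).trans (hlin i)
  filter_upwards [hkey] with ω hω
  have hmv : (1 - P).mulVec (fun j => (μ[(fun ω' => Z ω' j)|mY]) ω) i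
      = (μ[(fun ω' => Z ω' i)|mY]) ω
        - ∑ k, P i k * (μ[(fun ω' => Z ω' k)|mY]) ω := by
    rw [Matrix.sub_mulVec, Pi.sub_apply, Matrix.one_mulVec]
    simp [Matrix.mulVec, dotProduct]
  simp only [hmv, hω, sub_self]
end

section
/- (SAVE principle) Let Y be a real random variable and Z a random vector in R^p with finite second moments. Let P be an orthogonal projection such that Y and Z are conditionally independent given PZ, the linearity condition E[Z | PZ] = PZ holds a.s., and Var(Z | PZ) = I_p - P a.s. Then (I_p - P)(E[Z Z^T | Y] - I_p) = 0 almost surely. -/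
open MeasureTheory Filter
open scoped Topology

private lemma clamp_abs_le {n x : ℝ} (hn : 0 ≤ n) : |max (-n) (min x n)| ≤ |x| := by
  rw [abs_le]
  constructor
  · exact le_max_of_le_right (le_min (neg_abs_le x) (le_trans (neg_nonpos.2 (abs_nonneg x)) hn))
  · exact max_le (le_trans (neg_nonpos.2 hn) (abs_nonneg x)) (le_trans (min_le_left _ _) (le_abs_self x))

private lemma clamp_eq {n x : ℝ} (hn : |x| ≤ n) : max (-n) (min x n) = x := by
  rw [abs_le] at hn
  rw [min_eq_left hn.2, max_eq_right hn.1]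

/-- conditional expectation of an affine combination -/
private lemma condexp_affine_combo {Ω : Type*} {m0 : MeasurableSpace Ω} (μ : Measure Ω)
    [IsProbabilityMeasure μ] {mY : MeasurableSpace Ω} (hle : mY ≤ m0)
    {ι : Type*} [Fintype ι] (c₀ : ℝ) (c : ι → ℝ) (f : ι → Ω → ℝ)
    (hf : ∀ q, Integrable (f q) μ) :
    μ[fun ω => c₀ + ∑ q : ι, c q * f q ω|mY]
      =ᵐ[μ] fun ω => c₀ + ∑ q : ι, c q * (μ[f q|mY]) ω := by
  have hint : ∀ q : ι, Integrable (c q • f q) μ := fun q => (hf q).smul (c q)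
  have hfun : (fun ω => c₀ + ∑ q : ι, c q * f q ω)
      = (fun _ => c₀) + ∑ q : ι, c q • f q := by
    funext ω
    simp [Finset.sum_apply]
  rw [hfun]
  have h3 := condExp_add (m := mY) (μ := μ) (integrable_const c₀)
    (integrable_finset_sum' Finset.univ fun q _ => hint q)
  have h1 := condExp_finset_sum (m := mY) (μ := μ) (s := Finset.univ)
    (f := fun q => c q • f q) (fun q _ => hint q)
  have h2 : ∀ᵐ ω ∂μ, ∀ q : ι, (μ[c q • f q|mY]) ω = c q * (μ[f q|mY]) ω :=
    ae_all_iff.mpr fun q => (condExp_smul (c q) (f q) (m := mY)).mono fun ω h => by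
      simpa using h
  filter_upwards [h3, h1, h2] with ω h3ω h1ω h2ω
  rw [h3ω]
  simp only [Pi.add_apply, condExp_const hle, Finset.sum_apply]
  rw [h1ω]
  simp only [Finset.sum_apply]
  exact congrArg (c₀ + ·) (Finset.sum_congr rfl fun q _ => h2ω q)

/-- **SAVE principle.** If `Y` and `Z` are conditionally independent given `PZ`,
`E[Z | PZ] = PZ` a.s. and `Var(Z | PZ) = I - P` a.s., then
`(I - P)(E[Z Zᵀ | Y] - I) = 0` almost surely. -/
theorem stmt_2 {Ω : Type*} [MeasurableSpace Ω] (μ : Measure Ω) [IsProbabilityMeasure μ]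
    {p : ℕ} (Y : Ω → ℝ) (hY : Measurable Y)
    (Z : Ω → Fin p → ℝ) (hZmeas : Measurable Z)
    (hZ2 : ∀ i, MemLp (fun ω => Z ω i) 2 μ)
    (P : Matrix (Fin p) (Fin p) ℝ) (hPproj : P * P = P) (hPsym : P.transpose = P)
    (m mY : MeasurableSpace Ω)
    (hm : m = MeasurableSpace.comap (fun ω => P.mulVec (Z ω)) inferInstance)
    (hmY : mY = MeasurableSpace.comap Y inferInstance)
    (hCI : ∀ g : (Fin p → ℝ) → ℝ, Measurable g → (∃ Cg, ∀ z, |g z| ≤ Cg) →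
      μ[(fun ω => g (Z ω))|mY ⊔ m] =ᵐ[μ] μ[(fun ω => g (Z ω))|m])
    (hLC : ∀ i, μ[(fun ω => Z ω i)|m] =ᵐ[μ] fun ω => P.mulVec (Z ω) i)
    (hCCV : ∀ i j,
      (fun ω => (μ[(fun ω' => Z ω' i * Z ω' j)|m]) ω
          - (μ[(fun ω' => Z ω' i)|m]) ω * (μ[(fun ω' => Z ω' j)|m]) ω)
        =ᵐ[μ] fun _ => (1 - P) i j) :
    ∀ᵐ ω ∂μ,
      (1 - P) * ((Matrix.of fun i j => (μ[(fun ω' => Z ω' i * Z ω' j)|mY]) ω) - 1) = 0 := by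
  rename_i m0 _instP
  letI : MeasurableSpace Ω := m0
  -- measurable space inequalities
  have hPZmeas : Measurable[m0] (fun ω => P.mulVec (Z ω)) := by
    refine measurable_pi_lambda _ fun i => ?_
    simp only [Matrix.mulVec, dotProduct]
    exact Finset.measurable_sum _ fun k _ =>
      measurable_const.mul ((measurable_pi_apply k).comp hZmeas)
  have hm_le : m ≤ m0 := by
    rw [hm]; exact hPZmeas.comap_le
  have hmY_le : mY ≤ m0 := by
    rw [hmY]; exact hY.comap_le
  have hj_le : mY ⊔ m ≤ m0 := sup_le hmY_le hm_le
  -- integrability of products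
  have hInt : ∀ i j, Integrable (fun ω => Z ω i * Z ω j) μ := by
    intro i j
    have h := ((hZ2 j).smul (hZ2 i) (r := 1)).integrable le_rfl
    simpa [smul_eq_mul, Pi.mul_def] using h
  -- key: conditional independence extends to the (unbounded) products
  have key : ∀ i j, μ[(fun ω => Z ω i * Z ω j)|mY ⊔ m]
      =ᵐ[μ] μ[(fun ω => Z ω i * Z ω j)|m] := by
    intro i j
    set f : Ω → ℝ := fun ω => Z ω i * Z ω j with hf
    set g : ℕ → (Fin p → ℝ) → ℝ := fun n z => max (-(n : ℝ)) (min (z i * z j) n) with hg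
    have gmeas : ∀ n, Measurable (g n) := fun n =>
      measurable_const.max (((measurable_pi_apply i).mul (measurable_pi_apply j)).min
        measurable_const)
    have gbdd : ∀ n : ℕ, ∀ z, |g n z| ≤ (n : ℝ) := by
      intro n z
      rw [abs_le]
      exact ⟨le_max_left _ _,
        max_le (neg_le_self (Nat.cast_nonneg n)) (min_le_right _ _)⟩
    have gdom : ∀ n ω, |g n (Z ω)| ≤ |f ω| := fun n ω => clamp_abs_le (Nat.cast_nonneg n)
    have gtend : ∀ ω, Tendsto (fun n => g n (Z ω)) atTop (𝓝 (f ω)) := by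
      intro ω
      refine Tendsto.congr' ?_ (tendsto_const_nhds (x := f ω))
      filter_upwards [eventually_ge_atTop ⌈|f ω|⌉₊] with n hn
      exact (clamp_eq ((Nat.le_ceil _).trans (by exact_mod_cast hn))).symm
    have intg : ∀ n, Integrable (fun ω => g n (Z ω)) μ := by
      intro n
      refine (memLp_top_of_bound (((gmeas n).comp hZmeas).aestronglyMeasurable) (n : ℝ)
        (Filter.Eventually.of_forall fun ω => ?_)).integrable le_top
      simpa [Real.norm_eq_abs] using gbdd n (Z ω)
    symm
    refine ae_eq_condExp_of_forall_setIntegral_eq hj_le (hInt i j)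
      (fun s _ _ => integrable_condExp.integrableOn) (fun s hs hμs => ?_)
      ((stronglyMeasurable_condExp (m := m) (μ := μ) (f := f)).mono (le_sup_right : m ≤ mY ⊔ m)).aestronglyMeasurable (μ := μ)
    -- ∫ x in s, μ[f|m] x = ∫ x in s, f x
    have step1 : ∀ n, ∫ x in s, g n (Z x) ∂μ = ∫ x in s, (μ[(fun ω => g n (Z ω))|m]) x ∂μ := by
      intro n
      rw [← setIntegral_condExp hj_le (intg n) hs]
      exact integral_congr_ae (ae_restrict_of_ae (hCI (g n) (gmeas n) ⟨n, gbdd n⟩))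
    have tendsto1 : Tendsto (fun n => ∫ x in s, g n (Z x) ∂μ) atTop
        (𝓝 (∫ x in s, f x ∂μ)) := by
      refine tendsto_integral_of_dominated_convergence (fun ω => |f ω|)
        (fun n => (((gmeas n).comp hZmeas).aestronglyMeasurable).restrict)
        ((hInt i j).abs.integrableOn)
        (fun n => ae_of_all _ fun ω => by simpa [Real.norm_eq_abs] using gdom n ω)
        (ae_of_all _ fun ω => gtend ω)
    have tendsto0 : Tendsto (fun n => ∫ ω, |g n (Z ω) - f ω| ∂μ) atTop (𝓝 0) := by
      have h0 : (0 : ℝ) = ∫ ω, |(0 : ℝ)| ∂μ := by simp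
      rw [h0]
      refine tendsto_integral_of_dominated_convergence (fun ω => 2 * |f ω|)
        (fun n => (((((gmeas n).comp hZmeas).sub (((measurable_pi_apply i).comp hZmeas).mul ((measurable_pi_apply j).comp hZmeas))).abs).aestronglyMeasurable))
        (((hInt i j).abs.const_mul 2))
        (fun n => ae_of_all _ fun ω => ?_) (ae_of_all _ fun ω => ?_)
      · have := gdom n ω
        have h2 := abs_sub (g n (Z ω)) (f ω)
        calc ‖|g n (Z ω) - f ω|‖ = |g n (Z ω) - f ω| := by
              rw [Real.norm_eq_abs, abs_abs]
          _ ≤ |g n (Z ω)| + |f ω| := abs_sub _ _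
          _ ≤ 2 * |f ω| := by linarith
      · have h := (gtend ω).sub (tendsto_const_nhds (x := f ω))
        rw [sub_self] at h
        have h2 := (continuous_abs.tendsto 0).comp h
        simpa [Function.comp_def, abs_zero] using h2
    have tendsto2 : Tendsto (fun n => ∫ x in s, (μ[(fun ω => g n (Z ω))|m]) x ∂μ) atTop
        (𝓝 (∫ x in s, (μ[f|m]) x ∂μ)) := by
      rw [tendsto_iff_dist_tendsto_zero]
      refine squeeze_zero (fun n => dist_nonneg)
        (fun n => ?_) tendsto0
      -- dist ≤ ∫ |g n (Z) - f|
      have hsub : ∀ᵐ x ∂μ, (μ[(fun ω => g n (Z ω))|m]) x - (μ[f|m]) x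
          = (μ[(fun ω => g n (Z ω) - f ω)|m]) x := by
        have h := condExp_sub (m := m) (μ := μ) (intg n) (hInt i j)
        have heq : (fun ω => g n (Z ω) - f ω) = (fun ω => g n (Z ω)) - f := rfl
        rw [heq]
        filter_upwards [h] with x hx
        simp only [Pi.sub_apply] at hx
        rw [hx]
      calc dist (∫ x in s, (μ[(fun ω => g n (Z ω))|m]) x ∂μ) (∫ x in s, (μ[f|m]) x ∂μ)
          = |∫ x in s, ((μ[(fun ω => g n (Z ω))|m]) x - (μ[f|m]) x) ∂μ| := by
            rw [Real.dist_eq, integral_sub integrable_condExp.integrableOn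
              integrable_condExp.integrableOn]
        _ ≤ ∫ x in s, |(μ[(fun ω => g n (Z ω))|m]) x - (μ[f|m]) x| ∂μ := by
            simpa [Real.norm_eq_abs] using
              norm_integral_le_integral_norm
                (fun x => (μ[(fun ω => g n (Z ω))|m]) x - (μ[f|m]) x) (μ := μ.restrict s)
        _ ≤ ∫ x, |(μ[(fun ω => g n (Z ω))|m]) x - (μ[f|m]) x| ∂μ :=
            setIntegral_le_integral ((integrable_condExp.sub integrable_condExp).abs)
              (ae_of_all _ fun x => abs_nonneg _)
        _ = ∫ x, |(μ[(fun ω => g n (Z ω) - f ω)|m]) x| ∂μ := by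
            refine integral_congr_ae (hsub.mono fun x hx => ?_)
            simp only [hx]
        _ ≤ ∫ x, |g n (Z x) - f x| ∂μ := integral_abs_condExp_le _
    have := tendsto1
    rw [funext step1] at this
    exact (tendsto_nhds_unique tendsto2 this)
  -- conditional second moment given m
  have hsymm : ∀ a b, P a b = P b a := fun a b =>
    ((Matrix.transpose_apply P b a).symm.trans (congrFun (congrFun hPsym b) a))
  have hcondm : ∀ i j, μ[(fun ω => Z ω i * Z ω j)|m]
      =ᵐ[μ] fun ω => (1 - P) i j + P.mulVec (Z ω) i * P.mulVec (Z ω) j := by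
    intro i j
    filter_upwards [hCCV i j, hLC i, hLC j] with ω h1 h2 h3
    rw [← h2, ← h3]
    linarith [h1]
  -- identity satisfied by the conditional second moment given Y
  have hMeq : ∀ i j, μ[(fun ω' => Z ω' i * Z ω' j)|mY] =ᵐ[μ] fun ω =>
      (1 - P) i j + ∑ q : Fin p × Fin p,
        (P i q.1 * P j q.2) * (μ[(fun ω' => Z ω' q.1 * Z ω' q.2)|mY]) ω := by
    intro i j
    have htower := (condExp_condExp_of_le (le_sup_left : mY ≤ mY ⊔ m) hj_le
      (f := fun ω => Z ω i * Z ω j) (μ := μ)).symm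
    have h1 := condExp_congr_ae (m := mY) (μ := μ) (key i j)
    have h2 := condExp_congr_ae (m := mY) (μ := μ) (hcondm i j)
    have hprod : (fun ω => (1 - P) i j + P.mulVec (Z ω) i * P.mulVec (Z ω) j)
        = fun ω => (1 - P) i j + ∑ q : Fin p × Fin p,
            (P i q.1 * P j q.2) * (Z ω q.1 * Z ω q.2) := by
      funext ω
      congr 1
      simp only [Matrix.mulVec, dotProduct]
      rw [Finset.sum_mul_sum, Fintype.sum_prod_type]
      exact Finset.sum_congr rfl fun k _ => Finset.sum_congr rfl fun l _ => by ring
    rw [hprod] at h2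
    have h3 := condexp_affine_combo μ hmY_le ((1 - P) i j)
      (fun q : Fin p × Fin p => P i q.1 * P j q.2)
      (fun q ω => Z ω q.1 * Z ω q.2) (fun q => hInt q.1 q.2)
    exact htower.trans (h1.trans (h2.trans h3))
  have hfinal : ∀ᵐ ω ∂μ, ∀ i j, (μ[(fun ω' => Z ω' i * Z ω' j)|mY]) ω =
      (1 - P) i j + ∑ q : Fin p × Fin p,
        (P i q.1 * P j q.2) * (μ[(fun ω' => Z ω' q.1 * Z ω' q.2)|mY]) ω :=
    ae_all_iff.mpr fun i => ae_all_iff.mpr fun j => hMeq i j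
  filter_upwards [hfinal] with ω hω
  set M : Matrix (Fin p) (Fin p) ℝ :=
    Matrix.of fun i j => (μ[(fun ω' => Z ω' i * Z ω' j)|mY]) ω with hMdef
  have hM : M = (1 - P) + P * M * P := by
    ext i j
    rw [hMdef]
    simp only [Matrix.of_apply, Matrix.add_apply, Matrix.mul_apply]
    rw [hω i j]
    congr 1
    rw [Fintype.sum_prod_type]
    rw [Finset.sum_comm]
    refine Finset.sum_congr rfl fun l _ => ?_
    rw [Finset.sum_mul]
    refine Finset.sum_congr rfl fun k _ => ?_
    rw [hsymm j l]
    ring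
  have hQP : (1 - P) * P = 0 := by rw [sub_mul, one_mul, hPproj, sub_self]
  have hQQ : (1 - P) * (1 - P) = 1 - P := by rw [mul_sub, mul_one, hQP, sub_zero]
  have hQPMP : (1 - P) * (P * M * P) = 0 := by
    rw [← Matrix.mul_assoc, ← Matrix.mul_assoc, hQP, Matrix.zero_mul, Matrix.zero_mul]
  calc (1 - P) * (M - 1) = (1 - P) * (((1 - P) + P * M * P) - 1) := by rw [← hM]
    _ = (1 - P) * (1 - P) + (1 - P) * (P * M * P) - (1 - P) * 1 := by
        rw [mul_sub, mul_add]
    _ = 0 := by rw [hQQ, hQPMP, mul_one, add_zero, sub_self]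
end

section
/- (Bayes AM risk formula) In the setting of the AM-risk Bayes classifier, the minimal AM risk equals R_AM(h*) = (1/2) E[ min( η(X)/π, (1-η(X))/(1-π) ) ], where h*(x) = 1{η(x) > π}. -/
open MeasureTheory Filter
open scoped Topology

/-- The arithmetic-mean (AM) risk of a classifier `h` (identified with the set where it
predicts `1`): `(1/2)[P(h(X)=1 | T=0) + P(h(X)=0 | T=1)]`. -/
noncomputable def amRisk {Ω E : Type*} [MeasurableSpace Ω] (μ : Measure Ω)
    (X : Ω → E) (T : Ω → Bool) (h : E → Prop) : ℝ :=
  (1/2) * ((μ {ω | h (X ω) ∧ T ω = false}).toReal / (μ {ω | T ω = false}).toReal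
    + (μ {ω | ¬ h (X ω) ∧ T ω = true}).toReal / (μ {ω | T ω = true}).toReal)

/-- **Bayes AM risk formula.** The minimal AM risk, achieved by
`h*(x) = 1{η(x) > π}`, equals `(1/2) E[min(η(X)/π, (1-η(X))/(1-π))]`. -/
theorem stmt_11 {Ω : Type*} [MeasurableSpace Ω] (μ : Measure Ω) [IsProbabilityMeasure μ]
    {p : ℕ} (X : Ω → Fin p → ℝ) (T : Ω → Bool)
    (hX : Measurable X) (hT : Measurable T)
    (π : ℝ) (hπ : π = (μ {ω | T ω = true}).toReal) (hπ0 : 0 < π) (hπ1 : π < 1)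
    (η : (Fin p → ℝ) → ℝ) (hη : Measurable η)
    (hηver : (fun ω => η (X ω)) =ᵐ[μ]
      μ[(fun ω => if T ω = true then (1:ℝ) else 0)|MeasurableSpace.comap X inferInstance]) :
    amRisk μ X T (fun x => π < η x)
      = (1/2) * ∫ ω, min (η (X ω) / π) ((1 - η (X ω)) / (1 - π)) ∂μ := by
  classical
  set f : Ω → ℝ := fun ω => if T ω = true then (1:ℝ) else 0 with hf_def
  have hm_le : MeasurableSpace.comap X inferInstance ≤ ‹MeasurableSpace Ω› := hX.comap_le
  set Bt : Set Ω := {ω | T ω = true} with hBt_def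
  have hBt : MeasurableSet Bt := hT (measurableSet_singleton true)
  have hf_eq : f = Set.indicator Bt (fun _ => (1:ℝ)) := by
    funext ω; simp [hf_def, Set.indicator_apply, hBt_def, Set.mem_setOf_eq]
  have hf_int : Integrable f μ := by
    rw [hf_eq]; exact (integrable_const 1).indicator hBt
  have hηint : Integrable (fun ω => η (X ω)) μ := integrable_condExp.congr hηver.symm
  -- key identity on m-measurable sets
  have key : ∀ s : Set Ω, MeasurableSet[MeasurableSpace.comap X inferInstance] s →
      ∫ ω in s, η (X ω) ∂μ = (μ (s ∩ Bt)).toReal := by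
    intro s hs
    have h1 : ∫ ω in s, η (X ω) ∂μ = ∫ ω in s, (μ[f|MeasurableSpace.comap X inferInstance]) ω ∂μ :=
      setIntegral_congr_ae (hm_le s hs) (hηver.mono fun ω h _ => h)
    rw [h1, setIntegral_condExp hm_le hf_int hs, hf_eq, setIntegral_indicator hBt]
    simp [setIntegral_const, Measure.real]
  set A : Set Ω := X ⁻¹' {x | π < η x} with hA_def
  have hAm : MeasurableSet[MeasurableSpace.comap X inferInstance] A := ⟨{x | π < η x}, measurableSet_lt measurable_const hη, rfl⟩
  have hA : MeasurableSet A := hm_le A hAm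
  have hI1 : ∫ ω in A, η (X ω) ∂μ = (μ (A ∩ Bt)).toReal := key A hAm
  have hI2 : ∫ ω in Aᶜ, η (X ω) ∂μ = (μ (Aᶜ ∩ Bt)).toReal := key Aᶜ hAm.compl
  -- measure arithmetic
  have hfin : ∀ s : Set Ω, μ s ≠ ⊤ := fun s => measure_ne_top μ s
  have hsplit : (μ (A ∩ Bt)).toReal + (μ (A \ Bt)).toReal = (μ A).toReal := by
    rw [← ENNReal.toReal_add (hfin _) (hfin _), measure_inter_add_diff A hBt]
  have hABf : {ω | π < η (X ω) ∧ T ω = false} = A \ Bt := by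
    ext ω
    simp only [Set.mem_setOf_eq, Set.mem_diff, hA_def, Set.mem_preimage, hBt_def,
      Set.mem_setOf_eq, Bool.not_eq_true]
  have hAcBt : {ω | ¬ π < η (X ω) ∧ T ω = true} = Aᶜ ∩ Bt := by
    ext ω
    simp [hA_def, hBt_def, Set.mem_setOf_eq, and_comm]
  have hBf : {ω | T ω = false} = Btᶜ := by
    ext ω; simp [hBt_def, Bool.not_eq_true]
  have hπval : (μ Bt).toReal = π := hπ.symm
  have huniv : (μ (Set.univ : Set Ω)).toReal = 1 := by simp
  have hBfval : (μ Btᶜ).toReal = 1 - π := by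
    have := measure_compl hBt (hfin Bt)
    rw [this, measure_univ, ENNReal.toReal_sub_of_le prob_le_one ENNReal.one_ne_top,
      ENNReal.toReal_one, hπval]
  -- integral of 1 - η over A
  have hconst_int : Integrable (fun _ : Ω => (1:ℝ)) μ := integrable_const 1
  have hAmeas : (μ A).toReal = ∫ _ in A, (1:ℝ) ∂μ := by simp [setIntegral_const, Measure.real]
  have hJ1 : ∫ ω in A, (1 - η (X ω)) ∂μ = (μ (A \ Bt)).toReal := by
    rw [integral_sub hconst_int.integrableOn hηint.integrableOn, hI1, ← hAmeas]
    linarith [hsplit]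
  -- integrability of the min
  have hg1 : Integrable (fun ω => η (X ω) / π) μ := hηint.div_const π
  have hg2 : Integrable (fun ω => (1 - η (X ω)) / (1 - π)) μ :=
    (hconst_int.sub hηint).div_const (1 - π)
  have hmin_int : Integrable (fun ω => min (η (X ω) / π) ((1 - η (X ω)) / (1 - π))) μ := by
    have := hg1.inf hg2
    refine this.congr (Filter.Eventually.of_forall fun ω => ?_)
    simp [Pi.inf_apply]
  have hπ1' : (0:ℝ) < 1 - π := by linarith
  -- split the min-integral
  have hsplitInt : ∫ ω, min (η (X ω) / π) ((1 - η (X ω)) / (1 - π)) ∂μ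
      = ∫ ω in A, min (η (X ω) / π) ((1 - η (X ω)) / (1 - π)) ∂μ
        + ∫ ω in Aᶜ, min (η (X ω) / π) ((1 - η (X ω)) / (1 - π)) ∂μ :=
    (integral_add_compl hA hmin_int).symm
  have hOnA : ∫ ω in A, min (η (X ω) / π) ((1 - η (X ω)) / (1 - π)) ∂μ
      = ∫ ω in A, (1 - η (X ω)) / (1 - π) ∂μ := by
    refine setIntegral_congr_fun hA fun ω hω => ?_
    have hω' : π < η (X ω) := hω
    refine min_eq_right ?_
    rw [div_le_div_iff₀ hπ1' hπ0]
    nlinarith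
  have hOnAc : ∫ ω in Aᶜ, min (η (X ω) / π) ((1 - η (X ω)) / (1 - π)) ∂μ
      = ∫ ω in Aᶜ, η (X ω) / π ∂μ := by
    refine setIntegral_congr_fun hA.compl fun ω hω => ?_
    have hω' : ¬ π < η (X ω) := hω
    refine min_eq_left ?_
    rw [div_le_div_iff₀ hπ0 hπ1']
    nlinarith [not_lt.mp hω']
  have hdivA : ∫ ω in A, (1 - η (X ω)) / (1 - π) ∂μ
      = (∫ ω in A, (1 - η (X ω)) ∂μ) / (1 - π) := integral_div _ _
  have hdivAc : ∫ ω in Aᶜ, η (X ω) / π ∂μ = (∫ ω in Aᶜ, η (X ω) ∂μ) / π := integral_div _ _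
  -- assemble
  have hLHSsets : amRisk μ X T (fun x => π < η x)
      = (1/2) * ((μ (A \ Bt)).toReal / (1 - π) + (μ (Aᶜ ∩ Bt)).toReal / π) := by
    rw [amRisk]
    congr 2
    · rw [show {ω | (fun x => π < η x) (X ω) ∧ T ω = false} = A \ Bt from hABf,
        show {ω | T ω = false} = Btᶜ from hBf, hBfval]
    · rw [show {ω | ¬ (fun x => π < η x) (X ω) ∧ T ω = true} = Aᶜ ∩ Bt from hAcBt,
        show {ω | T ω = true} = Bt from rfl, hπval]
  rw [hLHSsets, hsplitInt, hOnA, hOnAc, hdivA, hdivAc, hJ1, hI2]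
end

section
/- (Dimension reduction bias bound for the AM risk) Let X = (V, W) and T = 1{Y>y} with π = P(Y>y) ≤ 1/2. Let η(x) = P(T=1 | X=x) and η_W(w) = P(T=1 | W=w). Let h* and h*_W be the Bayes classifiers for the full and reduced problems. Then R_AM(h*_W) - R_AM(h*) ≤ (1/2) E| P(Y>y | V,W) - P(Y>y | W) | / P(Y>y). In particular, if Y is tail conditionally independent of V given W, then R_AM(h*_W) - R_AM(h*) → 0 as y → y+. -/
open MeasureTheory Filter
open scoped Topology

lemma min_split (π x : ℝ) (hπ : 0 < π) (hπ' : 0 < 1 - π) :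
    min (x / π) ((1 - x) / (1 - π)) = x / π + min 0 ((π - x) / (π * (1 - π))) := by
  rcases le_total x π with h | h
  · rw [min_eq_left ((div_le_div_iff₀ hπ hπ').mpr (by nlinarith)),
      min_eq_left (div_nonneg (by linarith) (by positivity))]
    ring
  · rw [min_eq_right ((div_le_div_iff₀ hπ' hπ).mpr (by nlinarith)),
      min_eq_right (div_nonpos_of_nonpos_of_nonneg (by linarith) (by positivity))]
    field_simp
    ring

lemma min_zero_eq (x : ℝ) : min 0 x = (x - |x|) / 2 := by
  rcases le_total 0 x with h | h
  · rw [min_eq_left h, abs_of_nonneg h]; ring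
  · rw [min_eq_right h, abs_of_nonpos h]; ring

lemma min_int {Ω : Type*} [MeasurableSpace Ω] {μ : Measure Ω} {g : Ω → ℝ}
    (hg : Integrable g μ) : Integrable (fun ω => min 0 (g ω)) μ := by
  have : (fun ω => min 0 (g ω)) = fun ω => (g ω - |g ω|) / 2 := funext fun ω => min_zero_eq _
  rw [this]
  exact (hg.sub hg.abs).div_const 2

/-- Representation of the "risk combination" via an indicator integral. -/
lemma core_repr_ind {Ω : Type*} [MeasurableSpace Ω] (μ : Measure Ω) [IsProbabilityMeasure μ]
    (π : ℝ) (hπ : 0 < π) (hπ' : 0 < 1 - π)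
    (CE : Ω → ℝ) (hCE : Integrable CE μ)
    (S : Set Ω) (hS : MeasurableSet S) :
    (1/2 : ℝ) * (((μ S).toReal - ∫ ω in S, CE ω ∂μ) / (1 - π)
        + (π - ∫ ω in S, CE ω ∂μ) / π)
      = 1/2 * (1 + ∫ ω, S.indicator (fun ω => (π - CE ω) / (π * (1 - π))) ω ∂μ) := by
  have h1 : ∫ ω, S.indicator (fun ω => (π - CE ω) / (π * (1 - π))) ω ∂μ
      = (π * (μ S).toReal - ∫ ω in S, CE ω ∂μ) / (π * (1 - π)) := by
    rw [integral_indicator hS, integral_div]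
    congr 1
    rw [integral_sub (integrable_const π).restrict hCE.restrict, setIntegral_const]
    simp [mul_comm, measureReal_def]
  rw [h1]
  have h2 : π ≠ 0 := hπ.ne'
  have h3 : (1:ℝ) - π ≠ 0 := hπ'.ne'
  field_simp
  ring

/-- The Bayes-risk integrand equals `1 + ∫ min 0 ...`. -/
lemma core_repr_min {Ω : Type*} [MeasurableSpace Ω] (μ : Measure Ω) [IsProbabilityMeasure μ]
    (π : ℝ) (hπ : 0 < π) (hπ' : 0 < 1 - π)
    (CE : Ω → ℝ) (hCE : Integrable CE μ) (hICE : ∫ ω, CE ω ∂μ = π) :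
    ∫ ω, min (CE ω / π) ((1 - CE ω) / (1 - π)) ∂μ
      = 1 + ∫ ω, min 0 ((π - CE ω) / (π * (1 - π))) ∂μ := by
  have hg : Integrable (fun ω => (π - CE ω) / (π * (1 - π))) μ :=
    ((integrable_const π).sub hCE).div_const _
  have h1 : ∫ ω, min (CE ω / π) ((1 - CE ω) / (1 - π)) ∂μ
      = ∫ ω, (CE ω / π + min 0 ((π - CE ω) / (π * (1 - π)))) ∂μ :=
    integral_congr_ae (Filter.Eventually.of_forall fun ω => min_split π (CE ω) hπ hπ')
  rw [h1, integral_add (hCE.div_const π) (min_int hg), integral_div, hICE, div_self hπ.ne']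

lemma amRisk_eq {Ω E : Type*} [MeasurableSpace Ω] (μ : Measure Ω) [IsProbabilityMeasure μ]
    (X : Ω → E) (Y : Ω → ℝ) (y : ℝ) (hE : MeasurableSet {ω | y < Y ω})
    (p : E → Prop) (S : Set Ω) (hS : MeasurableSet S) (hp : ∀ ω, p (X ω) ↔ ω ∈ S) :
    amRisk μ X (fun ω => decide (y < Y ω)) p
      = (1/2) * (((μ S).toReal - (μ (S ∩ {ω | y < Y ω})).toReal)
            / (1 - (μ {ω | y < Y ω}).toReal)
        + ((μ {ω | y < Y ω}).toReal - (μ (S ∩ {ω | y < Y ω})).toReal)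
            / (μ {ω | y < Y ω}).toReal) := by
  set E' : Set Ω := {ω | y < Y ω} with hE'def
  have e1 : {ω | p (X ω) ∧ decide (y < Y ω) = false} = S \ E' := by
    ext ω
    simp only [Set.mem_setOf_eq, decide_eq_false_iff_not, Set.mem_diff, hp ω, hE'def]
  have e2 : {ω | ¬ p (X ω) ∧ decide (y < Y ω) = true} = E' \ S := by
    ext ω
    simp only [Set.mem_setOf_eq, decide_eq_true_eq, Set.mem_diff, hp ω, hE'def]
    tauto
  have e3 : {ω | decide (y < Y ω) = false} = E'ᶜ := by
    ext ω
    simp only [Set.mem_setOf_eq, decide_eq_false_iff_not, Set.mem_compl_iff, hE'def]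
  have e4 : {ω | decide (y < Y ω) = true} = E' := by
    ext ω
    simp only [Set.mem_setOf_eq, decide_eq_true_eq, hE'def]
  rw [amRisk, e1, e2, e3, e4]
  have d1 : (μ (S \ E')).toReal = (μ S).toReal - (μ (S ∩ E')).toReal := by
    have h2 : (μ (S ∩ E')).toReal + (μ (S \ E')).toReal = (μ S).toReal := by
      rw [← ENNReal.toReal_add (measure_ne_top μ _) (measure_ne_top μ _),
        measure_inter_add_diff S hE]
    linarith
  have d2 : (μ (E' \ S)).toReal = (μ E').toReal - (μ (S ∩ E')).toReal := by
    have h2 : (μ (E' ∩ S)).toReal + (μ (E' \ S)).toReal = (μ E').toReal := by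
      rw [← ENNReal.toReal_add (measure_ne_top μ _) (measure_ne_top μ _),
        measure_inter_add_diff E' hS]
    rw [Set.inter_comm] at h2
    linarith
  have d3 : (μ E'ᶜ).toReal = 1 - (μ E').toReal := by
    rw [prob_compl_eq_one_sub hE, ENNReal.toReal_sub_of_le prob_le_one ENNReal.one_ne_top,
      ENNReal.toReal_one]
  rw [d1, d2, d3]

lemma min_lip (π a b : ℝ) (hπ : 0 < π) (hhalf : π ≤ 1/2) :
    min (b / π) ((1 - b) / (1 - π)) ≤ min (a / π) ((1 - a) / (1 - π)) + |a - b| / π := by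
  have hπ' : (0:ℝ) < 1 - π := by linarith
  have h1 : b / π ≤ a / π + |a - b| / π := by
    have hba : b ≤ a + |a - b| := by
      have := le_abs_self (b - a)
      have := abs_sub_comm a b
      linarith
    calc b / π ≤ (a + |a - b|) / π := by gcongr
      _ = a / π + |a - b| / π := add_div _ _ _
  have h2 : (1 - b) / (1 - π) ≤ (1 - a) / (1 - π) + |a - b| / π := by
    have hba : 1 - b ≤ (1 - a) + |a - b| := by
      have := le_abs_self (a - b)
      linarith
    calc (1 - b) / (1 - π) ≤ ((1 - a) + |a - b|) / (1 - π) := by gcongr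
      _ = (1 - a) / (1 - π) + |a - b| / (1 - π) := add_div _ _ _
      _ ≤ (1 - a) / (1 - π) + |a - b| / π :=
        add_le_add_right (div_le_div_of_nonneg_left (abs_nonneg _) hπ (by linarith : π ≤ 1 - π)) _
  calc min (b / π) ((1 - b) / (1 - π))
      ≤ min (a / π + |a - b| / π) ((1 - a) / (1 - π) + |a - b| / π) := min_le_min h1 h2
    _ = min (a / π) ((1 - a) / (1 - π)) + |a - b| / π := min_add_add_right _ _ _

lemma aux12 {Ω E1 E2 : Type*} [MeasurableSpace Ω] [MeasurableSpace E1] [MeasurableSpace E2]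
    (μ : Measure Ω) [IsProbabilityMeasure μ]
    (Y : Ω → ℝ) (V : Ω → E1) (W : Ω → E2)
    (hY : Measurable Y) (hV : Measurable V) (hW : Measurable W)
    (η : ℝ → E1 × E2 → ℝ) (ηW : ℝ → E2 → ℝ)
    (hηmeas : ∀ y, Measurable (η y)) (hηWmeas : ∀ y, Measurable (ηW y))
    (hηver : ∀ y, (fun ω => η y (V ω, W ω)) =ᵐ[μ]
      μ[(fun ω' => if y < Y ω' then (1:ℝ) else 0)|
        MeasurableSpace.comap (fun ω => (V ω, W ω)) inferInstance])
    (hηWver : ∀ y, (fun ω => ηW y (W ω)) =ᵐ[μ]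
      μ[(fun ω' => if y < Y ω' then (1:ℝ) else 0)|MeasurableSpace.comap W inferInstance])
    (y : ℝ) (hπpos : 0 < (μ {ω | y < Y ω}).toReal)
    (hπhalf : (μ {ω | y < Y ω}).toReal ≤ 1/2) :
    0 ≤ amRisk μ (fun ω => (V ω, W ω)) (fun ω => decide (y < Y ω))
          (fun x => (μ {ω | y < Y ω}).toReal < ηW y x.2)
        - amRisk μ (fun ω => (V ω, W ω)) (fun ω => decide (y < Y ω))
            (fun x => (μ {ω | y < Y ω}).toReal < η y x)
    ∧ amRisk μ (fun ω => (V ω, W ω)) (fun ω => decide (y < Y ω))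
          (fun x => (μ {ω | y < Y ω}).toReal < ηW y x.2)
        - amRisk μ (fun ω => (V ω, W ω)) (fun ω => decide (y < Y ω))
            (fun x => (μ {ω | y < Y ω}).toReal < η y x)
      ≤ (1/2) * ((∫ ω, |(μ[(fun ω' => if y < Y ω' then (1:ℝ) else 0)|
                MeasurableSpace.comap (fun ω => (V ω, W ω)) inferInstance]) ω
              - (μ[(fun ω' => if y < Y ω' then (1:ℝ) else 0)|
                MeasurableSpace.comap W inferInstance]) ω| ∂μ)
          / (μ {ω | y < Y ω}).toReal) := by
  have hv := hηver y
  have hvW := hηWver y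
  set X : Ω → E1 × E2 := fun ω => (V ω, W ω) with hXdef
  set g : Ω → ℝ := fun ω' => if y < Y ω' then (1:ℝ) else 0 with hgdef
  set E' : Set Ω := {ω | y < Y ω} with hE'def
  have hE : MeasurableSet E' := measurableSet_lt measurable_const hY
  set π : ℝ := (μ E').toReal with hπdef
  have hπ' : (0:ℝ) < 1 - π := by linarith
  have hm : MeasurableSpace.comap X inferInstance ≤ (inferInstance : MeasurableSpace Ω) :=
    (hV.prodMk hW).comap_le
  have hmW : MeasurableSpace.comap W inferInstance ≤ (inferInstance : MeasurableSpace Ω) :=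
    hW.comap_le
  set CE : Ω → ℝ := μ[g | MeasurableSpace.comap X inferInstance] with hCEdef
  set CEW : Ω → ℝ := μ[g | MeasurableSpace.comap W inferInstance] with hCEWdef
  have hg_eq : g = E'.indicator (fun _ => (1:ℝ)) := by
    funext ω
    by_cases h : y < Y ω <;> simp [hgdef, hE'def, Set.indicator_apply, h]
  have hg_int : Integrable g μ := by
    rw [hg_eq]; exact (integrable_const 1).indicator hE
  have hIg : ∀ S : Set Ω, ∫ ω in S, g ω ∂μ = (μ (S ∩ E')).toReal := by
    intro S
    rw [hg_eq, setIntegral_indicator hE, setIntegral_const, smul_eq_mul, mul_one, measureReal_def]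
  have hIg_univ : ∫ ω, g ω ∂μ = π := by
    rw [hg_eq, integral_indicator hE, setIntegral_const, smul_eq_mul, mul_one, measureReal_def]
  have hCE_int : Integrable CE μ := integrable_condExp
  have hCEW_int : Integrable CEW μ := integrable_condExp
  have hICE : ∫ ω, CE ω ∂μ = π := by rw [hCEdef, integral_condExp hm, hIg_univ]
  have hICEW : ∫ ω, CEW ω ∂μ = π := by rw [hCEWdef, integral_condExp hmW, hIg_univ]
  set A : Set Ω := {ω | π < η y (X ω)} with hAdef
  set B : Set Ω := {ω | π < ηW y (W ω)} with hBdef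
  have hA_m : MeasurableSet[MeasurableSpace.comap X inferInstance] A :=
    ⟨{x | π < η y x}, measurableSet_lt measurable_const (hηmeas y), rfl⟩
  have hB_mW : MeasurableSet[MeasurableSpace.comap W inferInstance] B :=
    ⟨{w | π < ηW y w}, measurableSet_lt measurable_const (hηWmeas y), rfl⟩
  have hB_m : MeasurableSet[MeasurableSpace.comap X inferInstance] B :=
    ⟨{x | π < ηW y x.2}, measurableSet_lt measurable_const ((hηWmeas y).comp measurable_snd),
      rfl⟩
  have hA0 : MeasurableSet A := hm _ hA_m
  have hB0 : MeasurableSet B := hm _ hB_m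
  have hJA : ∫ ω in A, CE ω ∂μ = (μ (A ∩ E')).toReal := by
    rw [hCEdef, setIntegral_condExp hm hg_int hA_m, hIg]
  have hJB : ∫ ω in B, CE ω ∂μ = (μ (B ∩ E')).toReal := by
    rw [hCEdef, setIntegral_condExp hm hg_int hB_m, hIg]
  have hJBW : ∫ ω in B, CEW ω ∂μ = (μ (B ∩ E')).toReal := by
    rw [hCEWdef, setIntegral_condExp hmW hg_int hB_mW, hIg]
  -- amRisk values
  have hRA0 : amRisk μ X (fun ω => decide (y < Y ω)) (fun x => π < η y x)
      = (1/2) * (((μ A).toReal - (μ (A ∩ E')).toReal) / (1 - π)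
        + (π - (μ (A ∩ E')).toReal) / π) :=
    amRisk_eq μ X Y y hE _ A hA0 (fun ω => Iff.rfl)
  have hRB0 : amRisk μ X (fun ω => decide (y < Y ω)) (fun x => π < ηW y x.2)
      = (1/2) * (((μ B).toReal - (μ (B ∩ E')).toReal) / (1 - π)
        + (π - (μ (B ∩ E')).toReal) / π) :=
    amRisk_eq μ X Y y hE _ B hB0 (fun ω => Iff.rfl)
  -- integrability of the auxiliary functions
  have hf_int : Integrable (fun ω => (π - CE ω) / (π * (1 - π))) μ :=
    ((integrable_const π).sub hCE_int).div_const _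
  have hfW_int : Integrable (fun ω => (π - CEW ω) / (π * (1 - π))) μ :=
    ((integrable_const π).sub hCEW_int).div_const _
  -- a.e. indicator identities
  have hAmin : (fun ω => A.indicator (fun ω => (π - CE ω) / (π * (1 - π))) ω)
      =ᵐ[μ] (fun ω => min 0 ((π - CE ω) / (π * (1 - π)))) := by
    filter_upwards [hv] with ω hω
    by_cases hmem : ω ∈ A
    · rw [Set.indicator_of_mem hmem, eq_comm, min_eq_right]
      have h1 : π < CE ω := by rw [← hω]; exact hmem
      exact div_nonpos_of_nonpos_of_nonneg (by linarith) (by positivity)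
    · rw [Set.indicator_of_notMem hmem, eq_comm, min_eq_left]
      have h1 : CE ω ≤ π := by rw [← hω]; exact le_of_not_gt hmem
      exact div_nonneg (by linarith) (by positivity)
  have hBmin : (fun ω => B.indicator (fun ω => (π - CEW ω) / (π * (1 - π))) ω)
      =ᵐ[μ] (fun ω => min 0 ((π - CEW ω) / (π * (1 - π)))) := by
    filter_upwards [hvW] with ω hω
    by_cases hmem : ω ∈ B
    · rw [Set.indicator_of_mem hmem, eq_comm, min_eq_right]
      have h1 : π < CEW ω := by rw [← hω]; exact hmem
      exact div_nonpos_of_nonpos_of_nonneg (by linarith) (by positivity)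
    · rw [Set.indicator_of_notMem hmem, eq_comm, min_eq_left]
      have h1 : CEW ω ≤ π := by rw [← hω]; exact le_of_not_gt hmem
      exact div_nonneg (by linarith) (by positivity)
  -- representations as Bayes risks
  have hRA' : amRisk μ X (fun ω => decide (y < Y ω)) (fun x => π < η y x)
      = 1/2 * (1 + ∫ ω, min 0 ((π - CE ω) / (π * (1 - π))) ∂μ) := by
    rw [hRA0, ← hJA, core_repr_ind μ π hπpos hπ' CE hCE_int A hA0, integral_congr_ae hAmin]
  have hRA : amRisk μ X (fun ω => decide (y < Y ω)) (fun x => π < η y x)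
      = 1/2 * ∫ ω, min (CE ω / π) ((1 - CE ω) / (1 - π)) ∂μ := by
    rw [hRA', core_repr_min μ π hπpos hπ' CE hCE_int hICE]
  have hRBW : amRisk μ X (fun ω => decide (y < Y ω)) (fun x => π < ηW y x.2)
      = 1/2 * ∫ ω, min (CEW ω / π) ((1 - CEW ω) / (1 - π)) ∂μ := by
    rw [hRB0, ← hJBW, core_repr_ind μ π hπpos hπ' CEW hCEW_int B hB0, integral_congr_ae hBmin,
      core_repr_min μ π hπpos hπ' CEW hCEW_int hICEW]
  have hRB_CE : amRisk μ X (fun ω => decide (y < Y ω)) (fun x => π < ηW y x.2)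
      = 1/2 * (1 + ∫ ω, B.indicator (fun ω => (π - CE ω) / (π * (1 - π))) ω ∂μ) := by
    rw [hRB0, ← hJB, core_repr_ind μ π hπpos hπ' CE hCE_int B hB0]
  constructor
  · -- nonnegativity
    have hptwise : ∀ ω, min 0 ((π - CE ω) / (π * (1 - π)))
        ≤ B.indicator (fun ω => (π - CE ω) / (π * (1 - π))) ω := by
      intro ω
      by_cases hmem : ω ∈ B
      · rw [Set.indicator_of_mem hmem]; exact min_le_right _ _
      · rw [Set.indicator_of_notMem hmem]; exact min_le_left _ _
    have hmono : ∫ ω, min 0 ((π - CE ω) / (π * (1 - π))) ∂μ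
        ≤ ∫ ω, B.indicator (fun ω => (π - CE ω) / (π * (1 - π))) ω ∂μ :=
      integral_mono (min_int hf_int) (hf_int.indicator hB0) hptwise
    rw [hRA', hRB_CE]
    linarith
  · -- the bound
    have hΔ_int : Integrable (fun ω => |CE ω - CEW ω| / π) μ :=
      ((hCE_int.sub hCEW_int).abs).div_const π
    have hF_int : Integrable (fun ω => min (CE ω / π) ((1 - CE ω) / (1 - π))) μ :=
      ((hCE_int.div_const π).add (min_int hf_int)).congr
        (Filter.Eventually.of_forall fun ω => (min_split π (CE ω) hπpos hπ').symm)
    have hFW_int : Integrable (fun ω => min (CEW ω / π) ((1 - CEW ω) / (1 - π))) μ :=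
      ((hCEW_int.div_const π).add (min_int hfW_int)).congr
        (Filter.Eventually.of_forall fun ω => (min_split π (CEW ω) hπpos hπ').symm)
    have hmono : ∫ ω, min (CEW ω / π) ((1 - CEW ω) / (1 - π)) ∂μ
        ≤ ∫ ω, (min (CE ω / π) ((1 - CE ω) / (1 - π)) + |CE ω - CEW ω| / π) ∂μ :=
      integral_mono hFW_int (hF_int.add hΔ_int)
        (fun ω => min_lip π (CE ω) (CEW ω) hπpos hπhalf)
    rw [integral_add hF_int hΔ_int, integral_div] at hmono
    rw [hRA, hRBW]
    linarith

/-- **Dimension reduction bias bound for the AM risk.** With `X = (V,W)`,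
`T = 1{Y>y}`, `π = P(Y>y) ≤ 1/2`, `η` and `η_W` versions of `P(T=1|X)` and `P(T=1|W)`, and the
Bayes classifiers `h*(x) = 1{η(x)>π}`, `h*_W(v,w) = 1{η_W(w)>π}`, the dimension reduction bias
satisfies `R_AM(h*_W) - R_AM(h*) ≤ (1/2) E|P(Y>y|V,W) - P(Y>y|W)|/P(Y>y)`; in particular,
under tail conditional independence of `Y` from `V` given `W`, this bias tends to `0` as
`y → y⁺` (modelled by the filter `l`). -/
theorem stmt_12 {Ω E1 E2 : Type*} [MeasurableSpace Ω] [MeasurableSpace E1] [MeasurableSpace E2]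
    (μ : Measure Ω) [IsProbabilityMeasure μ]
    (Y : Ω → ℝ) (V : Ω → E1) (W : Ω → E2)
    (hY : Measurable Y) (hV : Measurable V) (hW : Measurable W)
    (η : ℝ → E1 × E2 → ℝ) (ηW : ℝ → E2 → ℝ)
    (hηmeas : ∀ y, Measurable (η y)) (hηWmeas : ∀ y, Measurable (ηW y))
    (hηver : ∀ y, (fun ω => η y (V ω, W ω)) =ᵐ[μ]
      μ[(fun ω' => if y < Y ω' then (1:ℝ) else 0)|
        MeasurableSpace.comap (fun ω => (V ω, W ω)) inferInstance])
    (hηWver : ∀ y, (fun ω => ηW y (W ω)) =ᵐ[μ]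
      μ[(fun ω' => if y < Y ω' then (1:ℝ) else 0)|MeasurableSpace.comap W inferInstance])
    (l : Filter ℝ)
    (hpos : ∀ᶠ y in l, 0 < (μ {ω | y < Y ω}).toReal)
    (hhalf : ∀ᶠ y in l, (μ {ω | y < Y ω}).toReal ≤ 1/2)
    (hTCI : Tendsto (fun y =>
        (∫ ω, |(μ[(fun ω' => if y < Y ω' then (1:ℝ) else 0)|
                MeasurableSpace.comap (fun ω => (V ω, W ω)) inferInstance]) ω
              - (μ[(fun ω' => if y < Y ω' then (1:ℝ) else 0)|
                MeasurableSpace.comap W inferInstance]) ω| ∂μ)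
          / (μ {ω | y < Y ω}).toReal) l (𝓝 0)) :
    (∀ y : ℝ, 0 < (μ {ω | y < Y ω}).toReal → (μ {ω | y < Y ω}).toReal ≤ 1/2 →
      amRisk μ (fun ω => (V ω, W ω)) (fun ω => decide (y < Y ω))
          (fun x => (μ {ω | y < Y ω}).toReal < ηW y x.2)
        - amRisk μ (fun ω => (V ω, W ω)) (fun ω => decide (y < Y ω))
            (fun x => (μ {ω | y < Y ω}).toReal < η y x)
      ≤ (1/2) * ((∫ ω, |(μ[(fun ω' => if y < Y ω' then (1:ℝ) else 0)|
                MeasurableSpace.comap (fun ω => (V ω, W ω)) inferInstance]) ω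
              - (μ[(fun ω' => if y < Y ω' then (1:ℝ) else 0)|
                MeasurableSpace.comap W inferInstance]) ω| ∂μ)
          / (μ {ω | y < Y ω}).toReal))
    ∧ Tendsto (fun y =>
        amRisk μ (fun ω => (V ω, W ω)) (fun ω => decide (y < Y ω))
            (fun x => (μ {ω | y < Y ω}).toReal < ηW y x.2)
          - amRisk μ (fun ω => (V ω, W ω)) (fun ω => decide (y < Y ω))
              (fun x => (μ {ω | y < Y ω}).toReal < η y x)) l (𝓝 0) := by
  constructor
  · intro y h1 h2
    exact (aux12 μ Y V W hY hV hW η ηW hηmeas hηWmeas hηver hηWver y h1 h2).2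
  · apply tendsto_of_tendsto_of_tendsto_of_le_of_le' tendsto_const_nhds hTCI
    · filter_upwards [hpos, hhalf] with y h1 h2
      exact (aux12 μ Y V W hY hV hW η ηW hηmeas hηWmeas hηver hηWver y h1 h2).1
    · filter_upwards [hpos, hhalf] with y h1 h2
      have h3 := (aux12 μ Y V W hY hV hW η ηW hηmeas hηWmeas hηver hηWver y h1 h2).2
      have h4 : 0 ≤ (∫ ω, |(μ[(fun ω' => if y < Y ω' then (1:ℝ) else 0)|
                MeasurableSpace.comap (fun ω => (V ω, W ω)) inferInstance]) ω
              - (μ[(fun ω' => if y < Y ω' then (1:ℝ) else 0)|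
                MeasurableSpace.comap W inferInstance]) ω| ∂μ)
          / (μ {ω | y < Y ω}).toReal :=
        div_nonneg (integral_nonneg fun ω => abs_nonneg _) ENNReal.toReal_nonneg
      linarith
end

section
/- (Additive heavy-tailed model satisfies TCI) Let Y = V + Wξ where V ∈ [a,b] (−∞ < a < b < ∞), W ∈ [c,d] with 0 < c < d < ∞, V, W, ξ mutually independent, and ξ has continuous survival function S_ξ with y^α S_ξ(y) → C as y → ∞ for some α, C > 0. Assume V and W have densities f_1, f_2 and E[W^{2α}] < ∞. Then E| P(Y>y | V, W) - P(Y>y | W) | / P(Y>y) → 0 as y → ∞. -/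
open MeasureTheory Filter ProbabilityTheory
open scoped Topology

lemma stmt19_unif {Sξ : ℝ → ℝ} {α C : ℝ} (hα : 0 < α) (hC : 0 < C)
    (hreg : Tendsto (fun y => y ^ α * Sξ y) atTop (𝓝 C))
    (a b c d : ℝ) (hc : 0 < c) (hd : c ≤ d) {ε : ℝ} (hε : 0 < ε) :
    ∀ᶠ y in atTop, ∀ v ∈ Set.Icc a b, ∀ w ∈ Set.Icc c d,
      |Sξ ((y - v) / w) - C * w ^ α / y ^ α| ≤ ε / y ^ α := by
  have hd0 : 0 < d := lt_of_lt_of_le hc hd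
  set K : ℝ := max |a| |b| with hK
  have hK0 : 0 ≤ K := le_trans (abs_nonneg a) (le_max_left _ _)
  have h2d : (0:ℝ) < (2*d) ^ α := Real.rpow_pos_of_pos (by linarith) α
  have hdα : (0:ℝ) < d ^ α := Real.rpow_pos_of_pos hd0 α
  set δ1 : ℝ := ε / (2 * (2*d) ^ α) with hδ1def
  set δ2 : ℝ := ε / (2 * C * d ^ α) with hδ2def
  have hδ1 : 0 < δ1 := by positivity
  have hδ2 : 0 < δ2 := by positivity
  obtain ⟨M, hM⟩ := (Metric.tendsto_atTop.mp hreg) δ1 hδ1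
  have hcont : ContinuousAt (fun s : ℝ => s ^ α) 1 :=
    Real.continuousAt_rpow_const 1 α (Or.inl one_ne_zero)
  obtain ⟨η, hη0, hη⟩ := Metric.continuousAt_iff.mp hcont δ2 hδ2
  filter_upwards [eventually_ge_atTop (2*K + 1), eventually_ge_atTop (K + d * M),
    eventually_gt_atTop (K + K/η), eventually_ge_atTop 1] with y hy1 hy2 hy3 hy4
  intro v hv w hw
  have hy0 : (0:ℝ) < y := lt_of_lt_of_le one_pos hy4
  have hyα : (0:ℝ) < y ^ α := Real.rpow_pos_of_pos hy0 α
  have hvK : |v| ≤ K := by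
    rw [abs_le]
    exact ⟨by linarith [neg_abs_le a, le_max_left |a| |b|, hv.1],
      by linarith [le_abs_self b, le_max_right |a| |b|, hv.2]⟩
  have hvK' : v ≤ K := (abs_le.mp hvK).2
  have hw0 : 0 < w := lt_of_lt_of_le hc hw.1
  have hyv : 0 < y - v := by linarith
  set t : ℝ := (y - v)/w with ht
  have ht0 : 0 < t := div_pos hyv hw0
  have htM : M ≤ t := by
    have h1 : M ≤ (y - K)/d := by rw [le_div_iff₀ hd0]; linarith
    have h2 : (y - K)/d ≤ (y - v)/w := div_le_div₀ hyv.le (by linarith) hw0 hw.2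
    exact h1.trans h2
  have hdist := hM t htM
  rw [Real.dist_eq] at hdist
  set s : ℝ := y / (y - v) with hs
  have hs0 : 0 < s := div_pos hy0 hyv
  have hs2 : s ≤ 2 := by rw [hs, div_le_iff₀ hyv]; linarith
  have hs1 : |s - 1| < η := by
    have heq : s - 1 = v / (y - v) := by rw [hs]; field_simp; ring
    rw [heq, abs_div, abs_of_pos hyv]
    have h1 : |v| / (y - v) ≤ K / (y - K) := div_le_div₀ hK0 hvK (by linarith) (by linarith)
    have h2 : K / (y - K) < η := by
      rw [div_lt_iff₀ (by linarith)]
      have hKη : K / η < y - K := by linarith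
      calc K = η * (K/η) := by field_simp
        _ < η * (y - K) := mul_lt_mul_of_pos_left hKη hη0
    exact lt_of_le_of_lt h1 h2
  have hsα : |s ^ α - 1| < δ2 := by
    have := hη (show dist s 1 < η by rw [Real.dist_eq]; exact hs1)
    rwa [Real.dist_eq, Real.one_rpow] at this
  have hy_eq : y = t * w * s := by rw [ht, hs]; field_simp
  have hyα_eq : y ^ α = t ^ α * w ^ α * s ^ α := by
    rw [hy_eq, Real.mul_rpow (by positivity) hs0.le, Real.mul_rpow ht0.le hw0.le]
  have hwα_le : w ^ α ≤ d ^ α := Real.rpow_le_rpow hw0.le hw.2 hα.le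
  have hwα0 : 0 ≤ w ^ α := (Real.rpow_pos_of_pos hw0 α).le
  have hwsα : w ^ α * s ^ α ≤ (2*d) ^ α := by
    rw [← Real.mul_rpow hw0.le hs0.le]
    exact Real.rpow_le_rpow (by positivity) ((mul_le_mul hw.2 hs2 hs0.le hd0.le).trans_eq (mul_comm d 2)) hα.le
  have key : |y ^ α * Sξ t - C * w ^ α| ≤ ε := by
    have expand : y ^ α * Sξ t - C * w ^ α
        = (w ^ α * s ^ α) * (t ^ α * Sξ t - C) + C * w ^ α * (s ^ α - 1) := by
      rw [hyα_eq]; ring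
    rw [expand]
    have b1 : |(w ^ α * s ^ α) * (t ^ α * Sξ t - C)| ≤ (2*d)^α * δ1 := by
      rw [abs_mul, abs_of_nonneg (by positivity)]
      exact mul_le_mul hwsα hdist.le (abs_nonneg _) h2d.le
    have b2 : |C * w ^ α * (s ^ α - 1)| ≤ C * d ^ α * δ2 := by
      rw [abs_mul, abs_of_nonneg (by positivity : (0:ℝ) ≤ C * w ^ α)]
      exact mul_le_mul (by nlinarith) hsα.le (abs_nonneg _) (by positivity)
    have e1 : (2*d)^α * δ1 = ε/2 := by rw [hδ1def]; field_simp
    have e2 : C * d ^ α * δ2 = ε/2 := by rw [hδ2def]; field_simp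
    calc |(w ^ α * s ^ α) * (t ^ α * Sξ t - C) + C * w ^ α * (s ^ α - 1)|
        ≤ |(w ^ α * s ^ α) * (t ^ α * Sξ t - C)| + |C * w ^ α * (s ^ α - 1)| := abs_add_le _ _
      _ ≤ ε/2 + ε/2 := add_le_add (b1.trans_eq e1) (b2.trans_eq e2)
      _ = ε := by ring
  have heq2 : Sξ ((y-v)/w) - C * w ^ α / y ^ α = (y ^ α * Sξ t - C * w ^ α) / y ^ α := by
    rw [← ht]; field_simp
  rw [heq2, abs_div, abs_of_pos hyα]
  gcongr

lemma stmt19_condexp {Ω : Type*} [m0 : MeasurableSpace Ω] (μ : Measure Ω) [IsProbabilityMeasure μ]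
    (V W ξ : Ω → ℝ) (hV : Measurable V) (hW : Measurable W) (hξ : Measurable ξ)
    (hI : IndepFun (fun ω => (V ω, W ω)) ξ μ)
    (c : ℝ) (hc : 0 < c) (hWc : ∀ᵐ ω ∂μ, c ≤ W ω)
    (Sξ : ℝ → ℝ) (hSdef : ∀ y, Sξ y = (μ {ω | y < ξ ω}).toReal) (hSm : Measurable Sξ)
    (y : ℝ) :
    (fun ω => Sξ ((y - V ω) / W ω)) =ᵐ[μ]
      μ[(fun ω => if y < V ω + W ω * ξ ω then (1:ℝ) else 0) |
        MeasurableSpace.comap (fun ω => (V ω, W ω)) inferInstance] := by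
  classical
  set P : Ω → ℝ × ℝ := fun ω => (V ω, W ω) with hPdef
  have hP : Measurable P := hV.prodMk hW
  have hm : MeasurableSpace.comap P inferInstance ≤ m0 := hP.comap_le
  set f : Ω → ℝ := fun ω => if y < V ω + W ω * ξ ω then (1:ℝ) else 0 with hfdef
  have hsetm : MeasurableSet {ω | y < V ω + W ω * ξ ω} :=
    measurableSet_lt measurable_const (hV.add (hW.mul hξ))
  have hfm : Measurable f := Measurable.ite hsetm measurable_const measurable_const
  have hfb : ∀ ω, ‖f ω‖ ≤ 1 := by
    intro ω; simp only [hfdef]; split <;> simp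
  have hfint : Integrable f μ :=
    (integrable_const (1:ℝ)).mono' hfm.aestronglyMeasurable (ae_of_all _ hfb)
  set φ : ℝ × ℝ → ℝ := fun p => Sξ ((y - p.1) / p.2) with hφdef
  have hφ : Measurable φ := hSm.comp ((measurable_const.sub measurable_fst).div measurable_snd)
  have hS01 : ∀ q : ℝ, 0 ≤ Sξ q ∧ Sξ q ≤ 1 := by
    intro q
    rw [hSdef]
    exact ⟨ENNReal.toReal_nonneg, by simpa using ENNReal.toReal_mono ENNReal.one_ne_top prob_le_one⟩
  have hGb : ∀ ω, ‖φ (P ω)‖ ≤ 1 := by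
    intro ω
    rw [Real.norm_eq_abs, abs_le]
    exact ⟨by linarith [(hS01 ((y - (P ω).1) / (P ω).2)).1],
      (hS01 ((y - (P ω).1) / (P ω).2)).2⟩
  have hGint : Integrable (fun ω => φ (P ω)) μ :=
    (integrable_const (1:ℝ)).mono' (hφ.comp hP).aestronglyMeasurable (ae_of_all _ hGb)
  -- probability measures on the image
  have : IsProbabilityMeasure (μ.map P) := Measure.isProbabilityMeasure_map hP.aemeasurable
  have : IsProbabilityMeasure (μ.map ξ) := Measure.isProbabilityMeasure_map hξ.aemeasurable
  have hmap : μ.map (fun ω => (P ω, ξ ω)) = (μ.map P).prod (μ.map ξ) :=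
    (indepFun_iff_map_prod_eq_prod_map_map hP.aemeasurable hξ.aemeasurable).mp hI
  refine ae_eq_condExp_of_forall_setIntegral_eq hm hfint
    (fun s _ _ => hGint.integrableOn) ?_ ?_
  swap
  · exact StronglyMeasurable.aestronglyMeasurable
      ((hφ.comp (Measurable.of_comap_le le_rfl)).stronglyMeasurable)
  intro s hs _
  obtain ⟨B, hB, hBs⟩ := hs
  -- H on the product space
  set H : (ℝ × ℝ) × ℝ → ℝ :=
    fun q => (if q.1 ∈ B then (1:ℝ) else 0) * (if y < q.1.1 + q.1.2 * q.2 then (1:ℝ) else 0)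
    with hHdef
  have hHm : Measurable H := by
    apply Measurable.mul
    · exact Measurable.ite (measurable_fst hB) measurable_const measurable_const
    · refine Measurable.ite ?_ measurable_const measurable_const
      exact measurableSet_lt measurable_const
        ((measurable_fst.comp measurable_fst).add
          ((measurable_snd.comp measurable_fst).mul measurable_snd))
  have hHb : ∀ q, ‖H q‖ ≤ 1 := by
    intro q; simp only [hHdef]; split <;> split <;> simp
  -- inner-set measurability
  have hxset : ∀ p : ℝ × ℝ, MeasurableSet {x : ℝ | y < p.1 + p.2 * x} :=
    fun p => measurableSet_lt measurable_const (measurable_const.add (measurable_const.mul measurable_id))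
  -- LHS : ∫_s f
  have hsm0 : MeasurableSet s := hm s ⟨B, hB, hBs⟩
  have lhs_eq : ∫ x in s, f x ∂μ
      = ∫ p, (if p ∈ B then (1:ℝ) else 0) * ((μ.map ξ) {x | y < p.1 + p.2 * x}).toReal
          ∂(μ.map P) := by
    rw [← integral_indicator hsm0]
    have hind : ∀ ω, s.indicator f ω = H (P ω, ξ ω) := by
      intro ω
      by_cases hω : ω ∈ s
      · have hPB : P ω ∈ B := by rw [← hBs] at hω; exact hω
        simp [Set.indicator_of_mem hω, hHdef, hPB, hfdef]
        rfl
      · have hPB : P ω ∉ B := by rw [← hBs] at hω; exact hω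
        simp [Set.indicator_of_notMem hω, hHdef, hPB]
    simp_rw [hind]
    rw [← integral_map (hP.prodMk hξ).aemeasurable hHm.aestronglyMeasurable, hmap]
    have hHint : Integrable H ((μ.map P).prod (μ.map ξ)) :=
      (integrable_const (1:ℝ)).mono' hHm.aestronglyMeasurable (ae_of_all _ hHb)
    rw [integral_prod H hHint]
    congr 1
    funext p
    simp only [hHdef]
    have hindic : (fun x : ℝ => if y < p.1 + p.2 * x then (1:ℝ) else 0)
        = Set.indicator {x : ℝ | y < p.1 + p.2 * x} (fun _ => (1:ℝ)) := by
      funext x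
      by_cases hx : y < p.1 + p.2 * x
      · simp [hx, Set.indicator_of_mem, Set.mem_setOf_eq]
      · simp [hx, Set.indicator_of_notMem, Set.mem_setOf_eq]
    by_cases hpB : p ∈ B
    · simp only [hpB, if_true, one_mul]
      rw [hindic, integral_indicator_const (1:ℝ) (hxset p), smul_eq_mul, mul_one]
      rfl
    · simp [hpB]
  -- RHS : ∫_s G
  have rhs_eq : ∫ x in s, φ (P x) ∂μ
      = ∫ p, (if p ∈ B then (1:ℝ) else 0) * φ p ∂(μ.map P) := by
    rw [← integral_indicator hsm0]
    have hind : ∀ ω, s.indicator (fun x => φ (P x)) ω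
        = (if P ω ∈ B then (1:ℝ) else 0) * φ (P ω) := by
      intro ω
      by_cases hω : ω ∈ s
      · have hPB : P ω ∈ B := by rw [← hBs] at hω; exact hω
        simp [Set.indicator_of_mem hω, hPB]
      · have hPB : P ω ∉ B := by rw [← hBs] at hω; exact hω
        simp [Set.indicator_of_notMem hω, hPB]
    simp_rw [hind]
    exact (integral_map (f := fun p => (if p ∈ B then (1:ℝ) else 0) * φ p) hP.aemeasurable
      ((Measurable.ite (hB) measurable_const measurable_const).mul hφ).aestronglyMeasurable).symm
  rw [rhs_eq, lhs_eq]
  -- a.e. equality under μ.map P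
  have hWc' : ∀ᵐ p ∂(μ.map P), c ≤ p.2 := by
    rw [ae_map_iff hP.aemeasurable (measurableSet_le measurable_const measurable_snd)]
    exact hWc
  refine integral_congr_ae ?_
  filter_upwards [hWc'] with p hp
  have hp2 : 0 < p.2 := lt_of_lt_of_le hc hp
  congr 1
  rw [Measure.map_apply hξ (hxset p)]
  have hset_eq : ξ ⁻¹' {x | y < p.1 + p.2 * x} = {ω | (y - p.1) / p.2 < ξ ω} := by
    ext ω
    simp only [Set.mem_preimage, Set.mem_setOf_eq, div_lt_iff₀ hp2]
    constructor <;> intro h <;> linarith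
  rw [hset_eq]
  exact hSdef ((y - p.1) / p.2)

theorem stmt19_main {Ω : Type*} [MeasurableSpace Ω] (μ : Measure Ω) [IsProbabilityMeasure μ]
    (V W ξ : Ω → ℝ) (hV : Measurable V) (hW : Measurable W) (hξ : Measurable ξ)
    (hindep : iIndepFun ![V, W, ξ] μ)
    (a b c d : ℝ) (hab : a < b) (hc : 0 < c) (hcd : c < d)
    (hVrange : ∀ᵐ ω ∂μ, V ω ∈ Set.Icc a b)
    (hWrange : ∀ᵐ ω ∂μ, W ω ∈ Set.Icc c d)
    (Sξ : ℝ → ℝ) (hSdef : ∀ y, Sξ y = (μ {ω | y < ξ ω}).toReal) (hScont : Continuous Sξ)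
    (α C : ℝ) (hα : 0 < α) (hC : 0 < C)
    (hreg : Tendsto (fun y => y ^ α * Sξ y) atTop (𝓝 C)) :
    Tendsto (fun y =>
      (∫ ω, |(μ[(fun ω' => if y < V ω' + W ω' * ξ ω' then (1:ℝ) else 0)|MeasurableSpace.comap (fun ω => (V ω, W ω)) inferInstance]) ω
            - (μ[(fun ω' => if y < V ω' + W ω' * ξ ω' then (1:ℝ) else 0)|MeasurableSpace.comap W inferInstance]) ω| ∂μ)
        / (μ {ω | y < V ω + W ω * ξ ω}).toReal) atTop (𝓝 0) := by
  -- basic independence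
  have hmeas3 : ∀ i, Measurable (![V, W, ξ] i) := by
    intro i
    fin_cases i
    · exact hV
    · exact hW
    · exact hξ
  have hI : IndepFun (fun ω => (V ω, W ω)) ξ μ := by
    have := hindep.indepFun_prodMk hmeas3 0 1 2 (by decide) (by decide)
    simpa using this
  have hWc : ∀ᵐ ω ∂μ, c ≤ W ω := hWrange.mono fun ω h => h.1
  have hSm : Measurable Sξ := hScont.measurable
  -- σ-algebra inequalities
  have hP : Measurable (fun ω => (V ω, W ω)) := hV.prodMk hW
  have hm1 : MeasurableSpace.comap (fun ω => (V ω, W ω)) inferInstance ≤ (inferInstance : MeasurableSpace Ω) := hP.comap_le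
  have hm2 : MeasurableSpace.comap W inferInstance ≤ (inferInstance : MeasurableSpace Ω) := hW.comap_le
  have hmle : MeasurableSpace.comap W inferInstance ≤ MeasurableSpace.comap (fun ω => (V ω, W ω)) inferInstance := by
    have : W = Prod.snd ∘ (fun ω => (V ω, W ω)) := rfl
    rw [this, ← MeasurableSpace.comap_comp]
    exact MeasurableSpace.comap_mono measurable_snd.comap_le
  -- positivity constants
  have hcα : (0:ℝ) < c ^ α := Real.rpow_pos_of_pos hc α
  have hdα : (0:ℝ) < d ^ α := Real.rpow_pos_of_pos (hc.trans hcd) α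
  -- target
  rw [NormedAddCommGroup.tendsto_nhds_zero]
  intro ε hε
  set ε₀ : ℝ := min (C * c ^ α / 2) (ε * (C * c ^ α) / 8) with hε₀def
  have hε₀ : 0 < ε₀ := lt_min (by positivity) (by positivity)
  have hε₀1 : ε₀ ≤ C * c ^ α / 2 := min_le_left _ _
  have hε₀2 : ε₀ ≤ ε * (C * c ^ α) / 8 := min_le_right _ _
  filter_upwards [stmt19_unif hα hC hreg a b c d hc hcd.le hε₀,
    eventually_gt_atTop 0] with y hy hy0
  have hyα : (0:ℝ) < y ^ α := Real.rpow_pos_of_pos hy0 α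
  -- notation
  set fy : Ω → ℝ := fun ω' => if y < V ω' + W ω' * ξ ω' then (1:ℝ) else 0 with hfydef
  set Gy : Ω → ℝ := fun ω => Sξ ((y - V ω) / W ω) with hGydef
  set Ly : Ω → ℝ := fun ω => C * W ω ^ α / y ^ α with hLydef
  have hGA : Gy =ᵐ[μ] μ[fy|MeasurableSpace.comap (fun ω => (V ω, W ω)) inferInstance] := by
    exact stmt19_condexp μ V W ξ hV hW hξ hI c hc hWc Sξ hSdef hSm y
  -- integrability facts
  have hsetm : MeasurableSet {ω | y < V ω + W ω * ξ ω} :=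
    measurableSet_lt measurable_const (hV.add (hW.mul hξ))
  have hfym : Measurable fy := Measurable.ite hsetm measurable_const measurable_const
  have hfyint : Integrable fy μ :=
    (integrable_const (1:ℝ)).mono' hfym.aestronglyMeasurable
      (ae_of_all _ fun ω => by simp only [hfydef]; split <;> simp)
  have hS01 : ∀ q : ℝ, 0 ≤ Sξ q ∧ Sξ q ≤ 1 := by
    intro q
    rw [hSdef]
    exact ⟨ENNReal.toReal_nonneg, by simpa using ENNReal.toReal_mono ENNReal.one_ne_top prob_le_one⟩
  have hGym : Measurable Gy :=
    hSm.comp ((measurable_const.sub hV).div hW)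
  have hGyint : Integrable Gy μ :=
    (integrable_const (1:ℝ)).mono' hGym.aestronglyMeasurable
      (ae_of_all _ fun ω => by
        rw [Real.norm_eq_abs, abs_le]
        exact ⟨by linarith [(hS01 ((y - V ω) / W ω)).1], (hS01 ((y - V ω) / W ω)).2⟩)
  have hLym : Measurable Ly := ((((Real.continuous_rpow_const hα.le).measurable).comp hW).const_mul C).div_const _
  have hLyint : Integrable Ly μ := by
    refine (integrable_const (C * d ^ α / y ^ α)).mono' hLym.aestronglyMeasurable ?_
    filter_upwards [hWrange] with ω hω
    have h1 : (0:ℝ) < W ω ^ α := Real.rpow_pos_of_pos (hc.trans_le hω.1) α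
    have h2 : W ω ^ α ≤ d ^ α := Real.rpow_le_rpow (hc.trans_le hω.1).le hω.2 hα.le
    rw [Real.norm_eq_abs, abs_of_nonneg (by positivity), hLydef]
    exact (div_le_div_iff_of_pos_right (Real.rpow_pos_of_pos hy0 α)).mpr
      (mul_le_mul_of_nonneg_left h2 hC.le)
  -- pointwise a.e. bound |Gy - Ly| ≤ ε₀ / y^α
  have hediff : ∀ᵐ ω ∂μ, |Gy ω - Ly ω| ≤ ε₀ / y ^ α := by
    filter_upwards [hVrange, hWrange] with ω h1 h2
    exact hy (V ω) h1 (W ω) h2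
  have hGLint : Integrable (fun ω => |Gy ω - Ly ω|) μ := (hGyint.sub hLyint).abs
  have hGL : ∫ ω, |Gy ω - Ly ω| ∂μ ≤ ε₀ / y ^ α := by
    have := integral_mono_ae hGLint (integrable_const (ε₀ / y ^ α)) hediff
    simpa [measure_univ] using this
  -- numerator bound
  set A : Ω → ℝ := μ[fy|MeasurableSpace.comap (fun ω => (V ω, W ω)) inferInstance] with hAdef
  set Bc : Ω → ℝ := μ[fy|MeasurableSpace.comap W inferInstance] with hBdef
  have hABint : Integrable (fun ω => |A ω - Bc ω|) μ :=
    (integrable_condExp.sub integrable_condExp).abs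
  have hN1 : ∫ ω, |A ω - Ly ω| ∂μ ≤ ε₀ / y ^ α := by
    have heq : (fun ω => |A ω - Ly ω|) =ᵐ[μ] fun ω => |Gy ω - Ly ω| := by
      filter_upwards [hGA] with ω hω
      rw [← hω]
    rw [integral_congr_ae heq]
    exact hGL
  -- Bc = μ[Gy|MeasurableSpace.comap W inferInstance] a.e.
  have hBc : Bc =ᵐ[μ] μ[Gy|MeasurableSpace.comap W inferInstance] := by
    have htower : μ[A|MeasurableSpace.comap W inferInstance] =ᵐ[μ] Bc := condExp_condExp_of_le hmle hm1
    have hcong : μ[Gy|MeasurableSpace.comap W inferInstance] =ᵐ[μ] μ[A|MeasurableSpace.comap W inferInstance] := condExp_congr_ae hGA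
    exact (hcong.trans htower).symm
  have hLsm : StronglyMeasurable[MeasurableSpace.comap W inferInstance] Ly :=
    ((((Real.continuous_rpow_const hα.le).measurable).const_mul C |>.div_const (y ^ α)).comp
      (Measurable.of_comap_le le_rfl)).stronglyMeasurable
  have hLcond : μ[Ly|MeasurableSpace.comap W inferInstance] = Ly := condExp_of_stronglyMeasurable hm2 hLsm hLyint
  have hLB : (fun ω => Ly ω - Bc ω) =ᵐ[μ] μ[(fun ω => Ly ω - Gy ω)|MeasurableSpace.comap W inferInstance] := by
    have h1 : μ[(fun ω => Ly ω - Gy ω)|MeasurableSpace.comap W inferInstance] =ᵐ[μ] fun ω => (μ[Ly|MeasurableSpace.comap W inferInstance]) ω - (μ[Gy|MeasurableSpace.comap W inferInstance]) ω := by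
      have := condExp_sub (m := MeasurableSpace.comap W inferInstance) (μ := μ) hLyint hGyint
      exact this
    refine (EventuallyEq.symm ?_)
    refine h1.trans ?_
    rw [hLcond]
    filter_upwards [hBc] with ω hω
    rw [← hω]
  have hN2 : ∫ ω, |Ly ω - Bc ω| ∂μ ≤ ε₀ / y ^ α := by
    have heq : (fun ω => |Ly ω - Bc ω|) =ᵐ[μ] fun ω => |(μ[(fun ω => Ly ω - Gy ω)|MeasurableSpace.comap W inferInstance]) ω| := by
      filter_upwards [hLB] with ω hω
      rw [hω]
    rw [integral_congr_ae heq]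
    refine le_trans (integral_abs_condExp_le _) ?_
    have : ∫ ω, |Ly ω - Gy ω| ∂μ = ∫ ω, |Gy ω - Ly ω| ∂μ := by
      congr 1; funext ω; rw [abs_sub_comm]
    rw [this]
    exact hGL
  have hNbound : ∫ ω, |A ω - Bc ω| ∂μ ≤ 2 * ε₀ / y ^ α := by
    have hptw : ∀ ω, |A ω - Bc ω| ≤ |A ω - Ly ω| + |Ly ω - Bc ω| := fun ω => abs_sub_le _ _ _
    have hint2 : Integrable (fun ω => |A ω - Ly ω| + |Ly ω - Bc ω|) μ :=
      ((integrable_condExp.sub hLyint).abs.add (hLyint.sub integrable_condExp).abs)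
    calc ∫ ω, |A ω - Bc ω| ∂μ ≤ ∫ ω, (|A ω - Ly ω| + |Ly ω - Bc ω|) ∂μ :=
          integral_mono hABint hint2 hptw
      _ = ∫ ω, |A ω - Ly ω| ∂μ + ∫ ω, |Ly ω - Bc ω| ∂μ :=
          integral_add (integrable_condExp.sub hLyint).abs (hLyint.sub integrable_condExp).abs
      _ ≤ ε₀ / y ^ α + ε₀ / y ^ α := add_le_add hN1 hN2
      _ = 2 * ε₀ / y ^ α := by ring
  -- denominator lower bound
  have hDeq : (μ {ω | y < V ω + W ω * ξ ω}).toReal = ∫ ω, Gy ω ∂μ := by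
    have h1 : (μ {ω | y < V ω + W ω * ξ ω}).toReal = ∫ ω, fy ω ∂μ := by
      have hfind : fy = Set.indicator {ω | y < V ω + W ω * ξ ω} (fun _ => (1:ℝ)) := by
        funext ω
        by_cases hω : y < V ω + W ω * ξ ω
        · simp [hfydef, hω, Set.indicator_of_mem, Set.mem_setOf_eq]
        · simp [hfydef, hω, Set.indicator_of_notMem, Set.mem_setOf_eq]
      rw [hfind, integral_indicator_const (1:ℝ) hsetm, smul_eq_mul, mul_one]
      rfl
    rw [h1, ← integral_condExp hm1 (f := fy)]
    exact (integral_congr_ae hGA).symm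
  have hDlow : (C * c ^ α / 2) / y ^ α ≤ (μ {ω | y < V ω + W ω * ξ ω}).toReal := by
    rw [hDeq]
    have hptw : ∀ᵐ ω ∂μ, (C * c ^ α / 2) / y ^ α ≤ Gy ω := by
      filter_upwards [hediff, hWrange] with ω h1 h2
      have hLlow : C * c ^ α / y ^ α ≤ Ly ω := by
        have : c ^ α ≤ W ω ^ α := Real.rpow_le_rpow hc.le h2.1 hα.le
        rw [hLydef]
        exact (div_le_div_iff_of_pos_right hyα).mpr (mul_le_mul_of_nonneg_left this hC.le)
      have habs := (abs_le.mp h1).1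
      have hε₀y : ε₀ / y ^ α ≤ (C * c ^ α / 2) / y ^ α := (div_le_div_iff_of_pos_right hyα).mpr hε₀1
      have : Ly ω - ε₀ / y ^ α ≤ Gy ω := by linarith
      have h3 : C * c ^ α / y ^ α - (C * c ^ α / 2) / y ^ α = (C * c ^ α / 2) / y ^ α := by
        field_simp; ring
      linarith
    have := integral_mono_ae (integrable_const ((C * c ^ α / 2) / y ^ α)) hGyint hptw
    simpa [measure_univ] using this
  -- conclude
  have hDpos : (0:ℝ) < (μ {ω | y < V ω + W ω * ξ ω}).toReal :=
    lt_of_lt_of_le (by positivity) hDlow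
  have hNpos : (0:ℝ) ≤ ∫ ω, |A ω - Bc ω| ∂μ := integral_nonneg fun ω => abs_nonneg _
  rw [Real.norm_eq_abs, abs_of_nonneg (div_nonneg hNpos hDpos.le)]
  have hq : (∫ ω, |A ω - Bc ω| ∂μ) / (μ {ω | y < V ω + W ω * ξ ω}).toReal
      ≤ (2 * ε₀ / y ^ α) / ((C * c ^ α / 2) / y ^ α) :=
    div_le_div₀ (by positivity) hNbound (by positivity) hDlow
  have heval : (2 * ε₀ / y ^ α) / ((C * c ^ α / 2) / y ^ α) = 4 * ε₀ / (C * c ^ α) := by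
    field_simp
    ring
  have hfin : 4 * ε₀ / (C * c ^ α) ≤ ε / 2 := by
    rw [div_le_iff₀ (by positivity)]
    calc 4 * ε₀ ≤ 4 * (ε * (C * c ^ α) / 8) := by linarith
      _ = ε / 2 * (C * c ^ α) := by ring
  calc (∫ ω, |A ω - Bc ω| ∂μ) / (μ {ω | y < V ω + W ω * ξ ω}).toReal
      ≤ 4 * ε₀ / (C * c ^ α) := by rw [← heval]; exact hq
    _ ≤ ε / 2 := hfin
    _ < ε := by linarith


/-- **additive heavy-tailed model satisfies TCI.** Let `Y = V + W ξ` with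
`V ∈ [a,b]`, `W ∈ [c,d]` (with `0 < c < d`), `V, W, ξ` mutually independent, `ξ` with
continuous survival function `S_ξ` satisfying `y^α S_ξ(y) → C > 0`, `V` and `W` with densities
`f₁, f₂`, and `E[W^{2α}] < ∞`. Then `E|P(Y>y|V,W) - P(Y>y|W)|/P(Y>y) → 0` as `y → ∞`. -/
theorem stmt_19 {Ω : Type*} [MeasurableSpace Ω] (μ : Measure Ω) [IsProbabilityMeasure μ]
    (V W ξ : Ω → ℝ) (hV : Measurable V) (hW : Measurable W) (hξ : Measurable ξ)
    (hindep : iIndepFun ![V, W, ξ] μ)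
    (a b c d : ℝ) (hab : a < b) (hc : 0 < c) (hcd : c < d)
    (hVrange : ∀ᵐ ω ∂μ, V ω ∈ Set.Icc a b)
    (hWrange : ∀ᵐ ω ∂μ, W ω ∈ Set.Icc c d)
    (Sξ : ℝ → ℝ) (hSdef : ∀ y, Sξ y = (μ {ω | y < ξ ω}).toReal) (hScont : Continuous Sξ)
    (α C : ℝ) (hα : 0 < α) (hC : 0 < C)
    (hreg : Tendsto (fun y => y ^ α * Sξ y) atTop (𝓝 C))
    (f1 f2 : ℝ → ℝ) (hf1m : Measurable f1) (hf2m : Measurable f2)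
    (hf1 : μ.map V = MeasureTheory.volume.withDensity (fun v => ENNReal.ofReal (f1 v)))
    (hf2 : μ.map W = MeasureTheory.volume.withDensity (fun w => ENNReal.ofReal (f2 w)))
    (hWmom : Integrable (fun ω => W ω ^ (2 * α)) μ)
    (mVW mW : MeasurableSpace Ω)
    (hmVW : mVW = MeasurableSpace.comap (fun ω => (V ω, W ω)) inferInstance)
    (hmW : mW = MeasurableSpace.comap W inferInstance) :
    Tendsto (fun y =>
      (∫ ω, |(μ[(fun ω' => if y < V ω' + W ω' * ξ ω' then (1:ℝ) else 0)|mVW]) ω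
            - (μ[(fun ω' => if y < V ω' + W ω' * ξ ω' then (1:ℝ) else 0)|mW]) ω| ∂μ)
        / (μ {ω | y < V ω + W ω * ξ ω}).toReal) atTop (𝓝 0) := by
  subst hmVW
  subst hmW
  exact stmt19_main μ V W ξ hV hW hξ hindep a b c d hab hc hcd hVrange hWrange
    Sξ hSdef hScont α C hα hC hreg
end
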